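/- For every n ≥ 2 there exists a 2-uniformity network on n elements of length 2n − 3 in which each lazy transposition is a star lazy transposition; an example is the sequence (1,2,1/2), (1,3,2/n), (1,2,1/2), (1,4,2/(n−1)), (1,2,1/2), …, (1,n,2/3), (1,2,1/2), which alternates the lazy transposition (1,2,1/2) with the lazy transpositions (1,k,2/(n−k+3)) for k = 3,…,n in increasing order. -/

import Mathlib

/-- Given a list of lazy transpositions `(a, b, p)` and a choice `f` of which of them
fire, the resulting permutation (the list is applied in order, first entry first). -/
def lazyOutcome (L : List (ℕ × ℕ × ℝ)) (f : Fin L.length → Bool) : Equiv.Perm ℕ :=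
  (List.ofFn (fun i : Fin L.length =>
    if f i then Equiv.swap (L.get i).1 (L.get i).2.1 else 1)).reverse.prod

/-- The probability that exactly the lazy transpositions selected by `f` fire
(the lazy transpositions being independent). -/
def lazyWeight (L : List (ℕ × ℕ × ℝ)) (f : Fin L.length → Bool) : ℝ :=
  ∏ i : Fin L.length, if f i then (L.get i).2.2 else 1 - (L.get i).2.2

/-- The entries of `L` are genuine lazy transpositions on `{1, …, n}`:
distinct points `a ≠ b` of `{1, …, n}` together with a probability `p ∈ [0,1]`. -/
def ValidLazy (n : ℕ) (L : List (ℕ × ℕ × ℝ)) : Prop :=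
  ∀ p ∈ L, p.1 ∈ Finset.Icc 1 n ∧ p.2.1 ∈ Finset.Icc 1 n ∧ p.1 ≠ p.2.1 ∧
    0 ≤ p.2.2 ∧ p.2.2 ≤ 1

/-- `L` is a 2-uniformity network on `{1, …, n}`: for every ordered pair `(x, y)` of
distinct points of `{1, …, n}`, the probability that the composition of the
independent lazy transpositions maps `1 ↦ x` and `2 ↦ y` is `1/(n(n-1))`. -/
def IsUnif2Net (n : ℕ) (L : List (ℕ × ℕ × ℝ)) : Prop :=
  ValidLazy n L ∧
  ∀ x y : ℕ, x ∈ Finset.Icc 1 n → y ∈ Finset.Icc 1 n → x ≠ y →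
    (∑ f : Fin L.length → Bool,
      if lazyOutcome L f 1 = x ∧ lazyOutcome L f 2 = y then lazyWeight L f else 0)
      = 1 / ((n : ℝ) * ((n : ℝ) - 1))

/-- The sequence of star lazy transpositions
`(1,2,1/2), (1,3,2/n), (1,2,1/2), (1,4,2/(n-1)), …, (1,n,2/3), (1,2,1/2)`,
alternating `(1,2,1/2)` with `(1,k,2/(n-k+3))` for `k = 3, …, n` in increasing
order. -/
noncomputable def unifSeq (n : ℕ) : List (ℕ × ℕ × ℝ) :=
  ((1 : ℕ), (2 : ℕ), (1 / 2 : ℝ)) ::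
    (List.range (n - 2)).flatMap
      (fun i => [((1 : ℕ), i + 3, (2 : ℝ) / ((n : ℝ) - (i : ℝ))),
                 ((1 : ℕ), (2 : ℕ), (1 / 2 : ℝ))])

noncomputable def lazyG (L : List (ℕ × ℕ × ℝ)) (u v x y : ℕ) : ℝ :=
  ∑ f : Fin L.length → Bool,
    if lazyOutcome L f u = x ∧ lazyOutcome L f v = y then lazyWeight L f else 0

lemma lazyOutcome_cons (a b : ℕ) (p : ℝ) (L : List (ℕ × ℕ × ℝ)) (c : Bool)
    (g : Fin L.length → Bool) (z : ℕ) :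
    lazyOutcome ((a, b, p) :: L) (Fin.cons c g) z
      = lazyOutcome L g (if c then Equiv.swap a b z else z) := by
  unfold lazyOutcome
  rw [List.ofFn_succ]
  simp only [Fin.cons_zero, Fin.cons_succ, List.get_eq_getElem, List.getElem_cons_zero,
    List.getElem_cons_succ, List.reverse_cons, List.prod_append, List.prod_cons,
    List.prod_nil, mul_one, Equiv.Perm.mul_apply]
  by_cases hc : c <;> simp [hc]

lemma lazyWeight_cons (a b : ℕ) (p : ℝ) (L : List (ℕ × ℕ × ℝ)) (c : Bool)
    (g : Fin L.length → Bool) :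
    lazyWeight ((a, b, p) :: L) (Fin.cons c g)
      = (if c then p else 1 - p) * lazyWeight L g := by
  unfold lazyWeight
  rw [← List.prod_ofFn, List.ofFn_succ, List.prod_cons, List.prod_ofFn]
  simp

lemma lazyG_nil (u v x y : ℕ) :
    lazyG [] u v x y = if u = x ∧ v = y then 1 else 0 := by
  unfold lazyG
  rw [Fintype.sum_eq_single (fun _ => false)]
  · simp [lazyOutcome, lazyWeight]
  · intro f hf
    exact absurd (funext fun i => i.elim0) (Ne.symm hf)

lemma lazyG_cons (a b : ℕ) (p : ℝ) (L : List (ℕ × ℕ × ℝ)) (u v x y : ℕ) :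
    lazyG ((a, b, p) :: L) u v x y
      = p * lazyG L (Equiv.swap a b u) (Equiv.swap a b v) x y
        + (1 - p) * lazyG L u v x y := by
  unfold lazyG
  change (∑ f : Fin (L.length + 1) → Bool,
    if lazyOutcome ((a, b, p) :: L) f u = x ∧ lazyOutcome ((a, b, p) :: L) f v = y
      then lazyWeight ((a, b, p) :: L) f else 0) = _
  rw [← Equiv.sum_comp (Fin.consEquiv (fun _ : Fin (L.length + 1) => Bool)),
    Fintype.sum_prod_type, Fintype.sum_bool]
  congr 1
  · rw [Finset.mul_sum]
    refine Finset.sum_congr rfl fun g _ => ?_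
    rw [show (Fin.consEquiv (fun _ : Fin (L.length + 1) => Bool)) (true, g)
        = Fin.cons true g from rfl]
    rw [lazyOutcome_cons, lazyOutcome_cons, lazyWeight_cons]
    simp [mul_ite]
  · rw [Finset.mul_sum]
    refine Finset.sum_congr rfl fun g _ => ?_
    rw [show (Fin.consEquiv (fun _ : Fin (L.length + 1) => Bool)) (false, g)
        = Fin.cons false g from rfl]
    rw [lazyOutcome_cons, lazyOutcome_cons, lazyWeight_cons]
    simp [mul_ite]

noncomputable def muD (n j u v : ℕ) : ℝ :=
  if u = v then 0
  else if (u = 1 ∨ u = 2) ∧ (v = 1 ∨ v = 2) then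
    ((n : ℝ) - j) * ((n : ℝ) - j - 1) / (2 * n * (n - 1))
  else if ((u = 1 ∨ u = 2) ∧ 3 ≤ v ∧ v ≤ j + 2) ∨ ((v = 1 ∨ v = 2) ∧ 3 ≤ u ∧ u ≤ j + 2) then
    ((n : ℝ) - j) / (2 * n * (n - 1))
  else if 3 ≤ u ∧ u ≤ j + 2 ∧ 3 ≤ v ∧ v ≤ j + 2 then
    1 / ((n : ℝ) * (n - 1))
  else 0

lemma mu_self (n j u : ℕ) : muD n j u u = 0 := if_pos rfl

lemma mu_A (n j u v : ℕ) (h1 : u = 1 ∨ u = 2) (h2 : v = 1 ∨ v = 2) (h : u ≠ v) :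
    muD n j u v = ((n : ℝ) - j) * ((n : ℝ) - j - 1) / (2 * n * (n - 1)) := by
  unfold muD; rw [if_neg h, if_pos ⟨h1, h2⟩]

lemma mu_B1 (n j u v : ℕ) (h1 : u = 1 ∨ u = 2) (h2 : 3 ≤ v) (h3 : v ≤ j + 2) :
    muD n j u v = ((n : ℝ) - j) / (2 * n * (n - 1)) := by
  unfold muD; rw [if_neg (by omega), if_neg (by omega), if_pos (Or.inl ⟨h1, h2, h3⟩)]

lemma mu_B2 (n j u v : ℕ) (h1 : v = 1 ∨ v = 2) (h2 : 3 ≤ u) (h3 : u ≤ j + 2) :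
    muD n j u v = ((n : ℝ) - j) / (2 * n * (n - 1)) := by
  unfold muD; rw [if_neg (by omega), if_neg (by omega), if_pos (Or.inr ⟨h1, h2, h3⟩)]

lemma mu_C (n j u v : ℕ) (h1 : 3 ≤ u) (h2 : u ≤ j + 2) (h3 : 3 ≤ v) (h4 : v ≤ j + 2)
    (h : u ≠ v) : muD n j u v = 1 / ((n : ℝ) * (n - 1)) := by
  unfold muD; rw [if_neg h, if_neg (by omega), if_neg (by omega), if_pos ⟨h1, h2, h3, h4⟩]

lemma mu_out1 (n j u v : ℕ) (h1 : j + 3 ≤ u) (h : u ≠ v) : muD n j u v = 0 := by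
  unfold muD; rw [if_neg h, if_neg (by omega), if_neg (by omega), if_neg (by omega)]

lemma mu_out2 (n j u v : ℕ) (h1 : j + 3 ≤ v) (h : u ≠ v) : muD n j u v = 0 := by
  unfold muD; rw [if_neg h, if_neg (by omega), if_neg (by omega), if_neg (by omega)]

set_option maxHeartbeats 3200000 in
lemma mu_update (n j : ℕ) (hj : j + 3 ≤ n) (u v : ℕ) (hu1 : 1 ≤ u) (hu2 : u ≤ n)
    (hv1 : 1 ≤ v) (hv2 : v ≤ n) :
    (2 / ((n : ℝ) - j)) *
        (muD n j (Equiv.swap 1 (j+3) (Equiv.swap 1 2 u)) (Equiv.swap 1 (j+3) (Equiv.swap 1 2 v))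
          + muD n j (Equiv.swap 1 (j+3) u) (Equiv.swap 1 (j+3) v))
      + (1 - 2 / ((n : ℝ) - j)) *
        (muD n j (Equiv.swap 1 2 u) (Equiv.swap 1 2 v) + muD n j u v)
      = 2 * muD n (j+1) u v := by
  have hjn : ((j : ℝ)) + 3 ≤ (n : ℝ) := by exact_mod_cast hj
  have hj0 : (0 : ℝ) ≤ (j : ℝ) := Nat.cast_nonneg j
  have h1 : (n : ℝ) ≠ 0 := by intro h; rw [h] at hjn; linarith
  have h2 : (n : ℝ) - 1 ≠ 0 := by intro h; nlinarith
  have h3 : (n : ℝ) - (j : ℝ) ≠ 0 := by intro h; nlinarith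
  have s21 : Equiv.swap 1 2 1 = 2 := Equiv.swap_apply_left 1 2
  have s22 : Equiv.swap 1 2 2 = 1 := Equiv.swap_apply_right 1 2
  have s2o : ∀ w : ℕ, 3 ≤ w → Equiv.swap 1 2 w = w := fun w h =>
    Equiv.swap_apply_of_ne_of_ne (by omega) (by omega)
  have s11 : Equiv.swap 1 (j+3) 1 = j+3 := Equiv.swap_apply_left 1 (j+3)
  have s1k : Equiv.swap 1 (j+3) (j+3) = 1 := Equiv.swap_apply_right 1 (j+3)
  have s1o : ∀ w : ℕ, w ≠ 1 → w ≠ j+3 → Equiv.swap 1 (j+3) w = w := fun w h h' =>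
    Equiv.swap_apply_of_ne_of_ne h h'
  have s12 : Equiv.swap 1 (j+3) 2 = 2 := s1o 2 (by omega) (by omega)
  by_cases huv : u = v
  · subst huv; simp [mu_self]
  rcases (show u = 1 ∨ u = 2 ∨ (3 ≤ u ∧ u ≤ j+2) ∨ u = j+3 ∨ (j+4 ≤ u ∧ u ≤ n) by omega)
    with hu | hu | hu | hu | hu <;>
  rcases (show v = 1 ∨ v = 2 ∨ (3 ≤ v ∧ v ≤ j+2) ∨ v = j+3 ∨ (j+4 ≤ v ∧ v ≤ n) by omega)
    with hv | hv | hv | hv | hv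
  -- case (1,1)
  · omega
  -- case (1,2)
  · subst hu
    subst hv
    simp only [s21, s11, s12, s22, mu_out2 n j 2 (j+3) (by omega) (by omega), mu_out1 n j (j+3) 2 (by omega) (by omega), mu_A n j 2 1 (by omega) (by omega) (by omega), mu_A n j 1 2 (by omega) (by omega) (by omega), mu_A n (j+1) 1 2 (by omega) (by omega) (by omega)]
    push_cast
    try field_simp
    try ring
  -- case (1,M)
  · subst hu
    simp only [s21, s11, s12, s2o v hv.1, s1o v (by omega) (by omega), mu_B1 n j 2 v (by omega) hv.1 hv.2, mu_out1 n j (j+3) v (by omega) (by omega), mu_B1 n j 1 v (by omega) hv.1 hv.2, mu_B1 n (j+1) 1 v (by omega) hv.1 (by omega)]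
    push_cast
    try field_simp
    try ring
  -- case (1,k)
  · subst hu
    subst hv
    simp only [s21, s11, s12, s2o (j+3) (by omega), s1k, mu_A n j 2 1 (by omega) (by omega) (by omega), mu_out1 n j (j+3) 1 (by omega) (by omega), mu_out2 n j 2 (j+3) (by omega) (by omega), mu_out2 n j 1 (j+3) (by omega) (by omega), mu_B1 n (j+1) 1 (j+3) (by omega) (by omega) (by omega)]
    push_cast
    try field_simp
    try ring
  -- case (1,B)
  · subst hu
    simp only [s21, s11, s12, s2o v (by omega), s1o v (by omega) (by omega), mu_out2 n j 2 v (by omega) (by omega), mu_out2 n j (j+3) v (by omega) (by omega), mu_out2 n j 1 v (by omega) (by omega), mu_out2 n (j+1) 1 v (by omega) (by omega)]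
    push_cast
    try field_simp
    try ring
  -- case (2,1)
  · subst hu
    subst hv
    simp only [s22, s11, s12, s21, mu_out1 n j (j+3) 2 (by omega) (by omega), mu_out2 n j 2 (j+3) (by omega) (by omega), mu_A n j 1 2 (by omega) (by omega) (by omega), mu_A n j 2 1 (by omega) (by omega) (by omega), mu_A n (j+1) 2 1 (by omega) (by omega) (by omega)]
    push_cast
    try field_simp
    try ring
  -- case (2,2)
  · omega
  -- case (2,M)
  · subst hu
    simp only [s22, s11, s12, s2o v hv.1, s1o v (by omega) (by omega), mu_out1 n j (j+3) v (by omega) (by omega), mu_B1 n j 2 v (by omega) hv.1 hv.2, mu_B1 n j 1 v (by omega) hv.1 hv.2, mu_B1 n (j+1) 2 v (by omega) hv.1 (by omega)]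
    push_cast
    try field_simp
    try ring
  -- case (2,k)
  · subst hu
    subst hv
    simp only [s22, s11, s12, s2o (j+3) (by omega), s1k, mu_out1 n j (j+3) 1 (by omega) (by omega), mu_A n j 2 1 (by omega) (by omega) (by omega), mu_out2 n j 1 (j+3) (by omega) (by omega), mu_out2 n j 2 (j+3) (by omega) (by omega), mu_B1 n (j+1) 2 (j+3) (by omega) (by omega) (by omega)]
    push_cast
    try field_simp
    try ring
  -- case (2,B)
  · subst hu
    simp only [s22, s11, s12, s2o v (by omega), s1o v (by omega) (by omega), mu_out2 n j (j+3) v (by omega) (by omega), mu_out2 n j 2 v (by omega) (by omega), mu_out2 n j 1 v (by omega) (by omega), mu_out2 n (j+1) 2 v (by omega) (by omega)]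
    push_cast
    try field_simp
    try ring
  -- case (M,1)
  · subst hv
    simp only [s2o u hu.1, s1o u (by omega) (by omega), s21, s11, s12, mu_B2 n j u 2 (by omega) hu.1 hu.2, mu_out2 n j u (j+3) (by omega) (by omega), mu_B2 n j u 1 (by omega) hu.1 hu.2, mu_B2 n (j+1) u 1 (by omega) hu.1 (by omega)]
    push_cast
    try field_simp
    try ring
  -- case (M,2)
  · subst hv
    simp only [s2o u hu.1, s1o u (by omega) (by omega), s22, s11, s12, mu_out2 n j u (j+3) (by omega) (by omega), mu_B2 n j u 2 (by omega) hu.1 hu.2, mu_B2 n j u 1 (by omega) hu.1 hu.2, mu_B2 n (j+1) u 2 (by omega) hu.1 (by omega)]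
    push_cast
    try field_simp
    try ring
  -- case (M,M)
  · simp only [s2o u hu.1, s1o u (by omega) (by omega), s2o v hv.1, s1o v (by omega) (by omega), mu_C n j u v hu.1 hu.2 hv.1 hv.2 huv, mu_C n (j+1) u v hu.1 (by omega) hv.1 (by omega) huv]
    push_cast
    try field_simp
    try ring
  -- case (M,k)
  · subst hv
    simp only [s2o u hu.1, s1o u (by omega) (by omega), s2o (j+3) (by omega), s1k, mu_B2 n j u 1 (by omega) hu.1 hu.2, mu_out2 n j u (j+3) (by omega) (by omega), mu_C n (j+1) u (j+3) hu.1 (by omega) (by omega) (by omega) (by omega)]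
    push_cast
    try field_simp
    try ring
  -- case (M,B)
  · simp only [s2o u hu.1, s1o u (by omega) (by omega), s2o v (by omega), s1o v (by omega) (by omega), mu_out2 n j u v (by omega) (by omega), mu_out2 n (j+1) u v (by omega) (by omega)]
    push_cast
    try field_simp
    try ring
  -- case (k,1)
  · subst hu
    subst hv
    simp only [s2o (j+3) (by omega), s1k, s21, s11, s12, mu_A n j 1 2 (by omega) (by omega) (by omega), mu_out2 n j 1 (j+3) (by omega) (by omega), mu_out1 n j (j+3) 2 (by omega) (by omega), mu_out1 n j (j+3) 1 (by omega) (by omega), mu_B2 n (j+1) (j+3) 1 (by omega) (by omega) (by omega)]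
    push_cast
    try field_simp
    try ring
  -- case (k,2)
  · subst hu
    subst hv
    simp only [s2o (j+3) (by omega), s1k, s22, s11, s12, mu_out2 n j 1 (j+3) (by omega) (by omega), mu_A n j 1 2 (by omega) (by omega) (by omega), mu_out1 n j (j+3) 1 (by omega) (by omega), mu_out1 n j (j+3) 2 (by omega) (by omega), mu_B2 n (j+1) (j+3) 2 (by omega) (by omega) (by omega)]
    push_cast
    try field_simp
    try ring
  -- case (k,M)
  · subst hu
    simp only [s2o (j+3) (by omega), s1k, s2o v hv.1, s1o v (by omega) (by omega), mu_B1 n j 1 v (by omega) hv.1 hv.2, mu_out1 n j (j+3) v (by omega) (by omega), mu_C n (j+1) (j+3) v (by omega) (by omega) hv.1 (by omega) (by omega)]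
    push_cast
    try field_simp
    try ring
  -- case (k,k)
  · omega
  -- case (k,B)
  · subst hu
    simp only [s2o (j+3) (by omega), s1k, s2o v (by omega), s1o v (by omega) (by omega), mu_out2 n j 1 v (by omega) (by omega), mu_out2 n j (j+3) v (by omega) (by omega), mu_out2 n (j+1) (j+3) v (by omega) (by omega)]
    push_cast
    try field_simp
    try ring
  -- case (B,1)
  · subst hv
    simp only [s2o u (by omega), s1o u (by omega) (by omega), s21, s11, s12, mu_out1 n j u 2 (by omega) (by omega), mu_out1 n j u (j+3) (by omega) (by omega), mu_out1 n j u 1 (by omega) (by omega), mu_out1 n (j+1) u 1 (by omega) (by omega)]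
    push_cast
    try field_simp
    try ring
  -- case (B,2)
  · subst hv
    simp only [s2o u (by omega), s1o u (by omega) (by omega), s22, s11, s12, mu_out1 n j u (j+3) (by omega) (by omega), mu_out1 n j u 2 (by omega) (by omega), mu_out1 n j u 1 (by omega) (by omega), mu_out1 n (j+1) u 2 (by omega) (by omega)]
    push_cast
    try field_simp
    try ring
  -- case (B,M)
  · simp only [s2o u (by omega), s1o u (by omega) (by omega), s2o v hv.1, s1o v (by omega) (by omega), mu_out1 n j u v (by omega) huv, mu_out1 n (j+1) u v (by omega) huv]
    push_cast
    try field_simp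
    try ring
  -- case (B,k)
  · subst hv
    simp only [s2o u (by omega), s1o u (by omega) (by omega), s2o (j+3) (by omega), s1k, mu_out1 n j u 1 (by omega) (by omega), mu_out1 n j u (j+3) (by omega) (by omega), mu_out1 n (j+1) u (j+3) (by omega) (by omega)]
    push_cast
    try field_simp
    try ring
  -- case (B,B)
  · simp only [s2o u (by omega), s1o u (by omega) (by omega), s2o v (by omega), s1o v (by omega) (by omega), mu_out1 n j u v (by omega) huv, mu_out1 n (j+1) u v (by omega) huv]
    push_cast
    try field_simp
    try ring

noncomputable def tailSeq (n j : ℕ) : List (ℕ × ℕ × ℝ) :=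
  ((List.range (n - 2)).drop j).flatMap
    (fun i => [((1 : ℕ), i + 3, (2 : ℝ) / ((n : ℝ) - (i : ℝ))),
               ((1 : ℕ), (2 : ℕ), (1 / 2 : ℝ))])

lemma tailSeq_nil (n : ℕ) : tailSeq n (n - 2) = [] := by
  unfold tailSeq
  rw [List.drop_eq_nil_of_le (by simp), List.flatMap_nil]

lemma tailSeq_cons (n j : ℕ) (h : j < n - 2) :
    tailSeq n j = ((1 : ℕ), j + 3, (2 : ℝ) / ((n : ℝ) - (j : ℝ))) ::
      ((1 : ℕ), (2 : ℕ), (1 / 2 : ℝ)) :: tailSeq n (j + 1) := by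
  unfold tailSeq
  rw [List.drop_eq_getElem_cons (by simpa using h)]
  simp

lemma unifSeq_eq (n : ℕ) : unifSeq n = ((1 : ℕ), (2 : ℕ), (1 / 2 : ℝ)) :: tailSeq n 0 := by
  simp [unifSeq, tailSeq]

lemma mem_Icc_swap (n a b : ℕ) (ha : a ∈ Finset.Icc 1 n) (hb : b ∈ Finset.Icc 1 n) :
    ∀ z ∈ Finset.Icc 1 n, Equiv.swap a b z ∈ Finset.Icc 1 n := by
  intro z hz
  rcases eq_or_ne z a with rfl | h1
  · rwa [Equiv.swap_apply_left]
  rcases eq_or_ne z b with rfl | h2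
  · rwa [Equiv.swap_apply_right]
  rwa [Equiv.swap_apply_of_ne_of_ne h1 h2]

lemma sum_reindex1 (n : ℕ) (T S : ℕ → ℕ) (hTS : ∀ z, T (S z) = z) (hST : ∀ z, S (T z) = z)
    (hT : ∀ z ∈ Finset.Icc 1 n, T z ∈ Finset.Icc 1 n)
    (hS : ∀ z ∈ Finset.Icc 1 n, S z ∈ Finset.Icc 1 n) (g : ℕ → ℝ) :
    ∑ u ∈ Finset.Icc 1 n, g (T u) = ∑ u ∈ Finset.Icc 1 n, g u :=
  Finset.sum_nbij' T S hT hS (fun a _ => hST a) (fun a _ => hTS a) (fun _ _ => rfl)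

lemma sum_reindex2 (n : ℕ) (T S : ℕ → ℕ) (hTS : ∀ z, T (S z) = z) (hST : ∀ z, S (T z) = z)
    (hT : ∀ z ∈ Finset.Icc 1 n, T z ∈ Finset.Icc 1 n)
    (hS : ∀ z ∈ Finset.Icc 1 n, S z ∈ Finset.Icc 1 n) (F : ℕ → ℕ → ℝ) :
    ∑ u ∈ Finset.Icc 1 n, ∑ v ∈ Finset.Icc 1 n, F (T u) (T v)
      = ∑ u ∈ Finset.Icc 1 n, ∑ v ∈ Finset.Icc 1 n, F u v := by
  rw [sum_reindex1 n T S hTS hST hT hS (fun u => ∑ v ∈ Finset.Icc 1 n, F u (T v))]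
  exact Finset.sum_congr rfl fun u _ =>
    sum_reindex1 n T S hTS hST hT hS (fun v => F u v)

lemma reindex_combo (n : ℕ) (T S : ℕ → ℕ) (hTS : ∀ z, T (S z) = z) (hST : ∀ z, S (T z) = z)
    (hT : ∀ z ∈ Finset.Icc 1 n, T z ∈ Finset.Icc 1 n)
    (hS : ∀ z ∈ Finset.Icc 1 n, S z ∈ Finset.Icc 1 n) (m g : ℕ → ℕ → ℝ) :
    ∑ u ∈ Finset.Icc 1 n, ∑ v ∈ Finset.Icc 1 n, m u v * g (T u) (T v)
      = ∑ u ∈ Finset.Icc 1 n, ∑ v ∈ Finset.Icc 1 n, m (S u) (S v) * g u v := by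
  rw [← sum_reindex2 n T S hTS hST hT hS (fun a b => m (S a) (S b) * g a b)]
  refine Finset.sum_congr rfl fun u _ => Finset.sum_congr rfl fun v _ => ?_
  simp only [hST]

lemma sum_ind (s : Finset ℕ) (h : ℕ → ℕ → ℝ) (a b : ℕ) (ha : a ∈ s) (hb : b ∈ s) :
    (∑ u ∈ s, ∑ v ∈ s, if u = a ∧ v = b then h u v else 0) = h a b := by
  have key : ∀ u ∈ s, (∑ v ∈ s, if u = a ∧ v = b then h u v else 0)
      = if u = a then h u b else 0 := by
    intro u _
    by_cases hua : u = a
    · subst hua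
      simp only [true_and, if_pos rfl]
      rw [Finset.sum_ite_eq' s b (h u)]
      simp [hb]
    · simp [hua]
  rw [Finset.sum_congr rfl key, Finset.sum_ite_eq' s a (fun u => h u b)]
  simp [ha]

lemma key_sum (n : ℕ) (hn : 2 ≤ n) (x y : ℕ) (hx : x ∈ Finset.Icc 1 n)
    (hy : y ∈ Finset.Icc 1 n) (hxy : x ≠ y) :
    ∀ d j, j + d = n - 2 →
      (∑ u ∈ Finset.Icc 1 n, ∑ v ∈ Finset.Icc 1 n,
          muD n j u v * lazyG (tailSeq n j) u v x y)
        = 1 / ((n : ℝ) * ((n : ℝ) - 1)) := by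
  have hn0 : (n : ℝ) ≠ 0 := by
    have : (2 : ℝ) ≤ (n : ℝ) := by exact_mod_cast hn
    intro h; rw [h] at this; linarith
  have hn1 : (n : ℝ) - 1 ≠ 0 := by
    have : (2 : ℝ) ≤ (n : ℝ) := by exact_mod_cast hn
    intro h; nlinarith
  intro d
  induction d with
  | zero =>
    intro j hj
    have hje : j = n - 2 := by omega
    subst hje
    rw [tailSeq_nil]
    have e : ∀ u v : ℕ, muD n (n - 2) u v * lazyG [] u v x y
        = if u = x ∧ v = y then muD n (n - 2) u v else 0 := by
      intro u v
      rw [lazyG_nil]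
      split_ifs <;> simp
    rw [Finset.sum_congr rfl fun u _ => Finset.sum_congr rfl fun v _ => e u v,
      sum_ind (Finset.Icc 1 n) (muD n (n - 2)) x y hx hy]
    have hx' := Finset.mem_Icc.mp hx
    have hy' := Finset.mem_Icc.mp hy
    have hcast : ((n - 2 : ℕ) : ℝ) = (n : ℝ) - 2 := by
      push_cast [Nat.cast_sub hn]; ring
    rcases (show (x = 1 ∨ x = 2) ∨ (3 ≤ x ∧ x ≤ n) by omega) with hxc | hxc <;>
      rcases (show (y = 1 ∨ y = 2) ∨ (3 ≤ y ∧ y ≤ n) by omega) with hyc | hyc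
    · rw [mu_A n (n - 2) x y hxc hyc hxy, hcast]; field_simp; ring
    · rw [mu_B1 n (n - 2) x y hxc hyc.1 (by omega), hcast]; field_simp; ring
    · rw [mu_B2 n (n - 2) x y hyc hxc.1 (by omega), hcast]; field_simp; ring
    · rw [mu_C n (n - 2) x y hxc.1 (by omega) hyc.1 (by omega) hxy]
  | succ d ih =>
    intro j hj
    have hj3 : j + 3 ≤ n := by omega
    have h1n : (1 : ℕ) ∈ Finset.Icc 1 n := Finset.mem_Icc.mpr (by omega)
    have h2n : (2 : ℕ) ∈ Finset.Icc 1 n := Finset.mem_Icc.mpr (by omega)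
    have hkn : (j + 3) ∈ Finset.Icc 1 n := Finset.mem_Icc.mpr (by omega)
    have swap_self1 : ∀ z : ℕ, Equiv.swap 1 (j+3) (Equiv.swap 1 (j+3) z) = z := fun z =>
      Equiv.swap_apply_self 1 (j+3) z
    have swap_self2 : ∀ z : ℕ, Equiv.swap 1 2 (Equiv.swap 1 2 z) = z := fun z =>
      Equiv.swap_apply_self 1 2 z
    have mem1 := mem_Icc_swap n 1 (j+3) h1n hkn
    have mem2 := mem_Icc_swap n 1 2 h1n h2n
    set G' : ℕ → ℕ → ℝ := fun a b => lazyG (tailSeq n (j + 1)) a b x y with hG'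
    have expand : ∀ u v : ℕ,
        muD n j u v * lazyG (tailSeq n j) u v x y
          = (1 / ((n : ℝ) - j)) *
              (muD n j u v * G' (Equiv.swap 1 2 (Equiv.swap 1 (j+3) u))
                (Equiv.swap 1 2 (Equiv.swap 1 (j+3) v)))
            + ((1 / ((n : ℝ) - j)) *
              (muD n j u v * G' (Equiv.swap 1 (j+3) u) (Equiv.swap 1 (j+3) v))
            + (((1 - 2 / ((n : ℝ) - j)) / 2) *
              (muD n j u v * G' (Equiv.swap 1 2 u) (Equiv.swap 1 2 v))
            + ((1 - 2 / ((n : ℝ) - j)) / 2) * (muD n j u v * G' u v))) := by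
      intro u v
      rw [tailSeq_cons n j (by omega)]
      simp only [lazyG_cons, hG']
      ring
    calc (∑ u ∈ Finset.Icc 1 n, ∑ v ∈ Finset.Icc 1 n,
            muD n j u v * lazyG (tailSeq n j) u v x y)
        = ∑ u ∈ Finset.Icc 1 n, ∑ v ∈ Finset.Icc 1 n,
            ((1 / ((n : ℝ) - j)) *
              (muD n j u v * G' (Equiv.swap 1 2 (Equiv.swap 1 (j+3) u))
                (Equiv.swap 1 2 (Equiv.swap 1 (j+3) v)))
            + ((1 / ((n : ℝ) - j)) *
              (muD n j u v * G' (Equiv.swap 1 (j+3) u) (Equiv.swap 1 (j+3) v))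
            + (((1 - 2 / ((n : ℝ) - j)) / 2) *
              (muD n j u v * G' (Equiv.swap 1 2 u) (Equiv.swap 1 2 v))
            + ((1 - 2 / ((n : ℝ) - j)) / 2) * (muD n j u v * G' u v)))) :=
          Finset.sum_congr rfl fun u _ => Finset.sum_congr rfl fun v _ => expand u v
      _ = (1 / ((n : ℝ) - j)) * (∑ u ∈ Finset.Icc 1 n, ∑ v ∈ Finset.Icc 1 n,
              muD n j u v * G' (Equiv.swap 1 2 (Equiv.swap 1 (j+3) u))
                (Equiv.swap 1 2 (Equiv.swap 1 (j+3) v)))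
          + ((1 / ((n : ℝ) - j)) * (∑ u ∈ Finset.Icc 1 n, ∑ v ∈ Finset.Icc 1 n,
              muD n j u v * G' (Equiv.swap 1 (j+3) u) (Equiv.swap 1 (j+3) v))
          + (((1 - 2 / ((n : ℝ) - j)) / 2) * (∑ u ∈ Finset.Icc 1 n, ∑ v ∈ Finset.Icc 1 n,
              muD n j u v * G' (Equiv.swap 1 2 u) (Equiv.swap 1 2 v))
          + ((1 - 2 / ((n : ℝ) - j)) / 2) * (∑ u ∈ Finset.Icc 1 n, ∑ v ∈ Finset.Icc 1 n,
              muD n j u v * G' u v))) := by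
          simp only [Finset.sum_add_distrib, Finset.mul_sum]
      _ = (1 / ((n : ℝ) - j)) * (∑ u ∈ Finset.Icc 1 n, ∑ v ∈ Finset.Icc 1 n,
              muD n j (Equiv.swap 1 (j+3) (Equiv.swap 1 2 u))
                (Equiv.swap 1 (j+3) (Equiv.swap 1 2 v)) * G' u v)
          + ((1 / ((n : ℝ) - j)) * (∑ u ∈ Finset.Icc 1 n, ∑ v ∈ Finset.Icc 1 n,
              muD n j (Equiv.swap 1 (j+3) u) (Equiv.swap 1 (j+3) v) * G' u v)
          + (((1 - 2 / ((n : ℝ) - j)) / 2) * (∑ u ∈ Finset.Icc 1 n, ∑ v ∈ Finset.Icc 1 n,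
              muD n j (Equiv.swap 1 2 u) (Equiv.swap 1 2 v) * G' u v)
          + ((1 - 2 / ((n : ℝ) - j)) / 2) * (∑ u ∈ Finset.Icc 1 n, ∑ v ∈ Finset.Icc 1 n,
              muD n j u v * G' u v))) := by
          rw [reindex_combo n (fun z => Equiv.swap 1 2 (Equiv.swap 1 (j+3) z))
              (fun z => Equiv.swap 1 (j+3) (Equiv.swap 1 2 z))
              (fun z => by simp only [swap_self2, swap_self1])
              (fun z => by simp only [swap_self1, swap_self2])
              (fun z hz => mem2 _ (mem1 z hz)) (fun z hz => mem1 _ (mem2 z hz))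
              (muD n j) G',
            reindex_combo n (fun z => Equiv.swap 1 (j+3) z) (fun z => Equiv.swap 1 (j+3) z)
              swap_self1 swap_self1 mem1 mem1 (muD n j) G',
            reindex_combo n (fun z => Equiv.swap 1 2 z) (fun z => Equiv.swap 1 2 z)
              swap_self2 swap_self2 mem2 mem2 (muD n j) G']
      _ = ∑ u ∈ Finset.Icc 1 n, ∑ v ∈ Finset.Icc 1 n, muD n (j+1) u v * G' u v := by
          simp only [Finset.mul_sum, ← Finset.sum_add_distrib]
          refine Finset.sum_congr rfl fun u hu => Finset.sum_congr rfl fun v hv => ?_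
          have hu' := Finset.mem_Icc.mp hu
          have hv' := Finset.mem_Icc.mp hv
          have upd := mu_update n j hj3 u v hu'.1 hu'.2 hv'.1 hv'.2
          linear_combination (G' u v / 2) * upd
      _ = 1 / ((n : ℝ) * ((n : ℝ) - 1)) := ih (j + 1) (by omega)

lemma mu_zero_eval (n : ℕ) (hn : 2 ≤ n) (u v : ℕ) (hu : u ∈ Finset.Icc 1 n)
    (hv : v ∈ Finset.Icc 1 n) :
    muD n 0 u v = (if u = 1 ∧ v = 2 then (1/2 : ℝ) else 0)
      + (if u = 2 ∧ v = 1 then (1/2 : ℝ) else 0) := by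
  have hn0 : (n : ℝ) ≠ 0 := by
    have : (2 : ℝ) ≤ (n : ℝ) := by exact_mod_cast hn
    intro h; rw [h] at this; linarith
  have hn1 : (n : ℝ) - 1 ≠ 0 := by
    have : (2 : ℝ) ≤ (n : ℝ) := by exact_mod_cast hn
    intro h; nlinarith
  have hu' := Finset.mem_Icc.mp hu
  have hv' := Finset.mem_Icc.mp hv
  by_cases h12 : u = 1 ∧ v = 2
  · obtain ⟨rfl, rfl⟩ := h12
    rw [mu_A n 0 1 2 (by omega) (by omega) (by omega)]
    norm_num
    field_simp
  by_cases h21 : u = 2 ∧ v = 1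
  · obtain ⟨rfl, rfl⟩ := h21
    rw [mu_A n 0 2 1 (by omega) (by omega) (by omega)]
    norm_num
    field_simp
  rw [if_neg h12, if_neg h21]
  by_cases huv : u = v
  · subst huv; rw [mu_self]; norm_num
  rcases (show 3 ≤ u ∨ 3 ≤ v ∨ ((u = 1 ∨ u = 2) ∧ (v = 1 ∨ v = 2)) by omega) with h | h | h
  · rw [mu_out1 n 0 u v (by omega) huv]; norm_num
  · rw [mu_out2 n 0 u v (by omega) huv]; norm_num
  · exfalso; omega

/-- **Star 2-uniformity networks of length `2n - 3`.** For every `n ≥ 2` there is a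
2-uniformity network on `n` elements of length `2n - 3` all of whose lazy
transpositions are star lazy transpositions; an example is the explicit sequence
`unifSeq n`. -/
theorem exists_two_uniformity_star_network (n : ℕ) (hn : 2 ≤ n) :
    (∃ L : List (ℕ × ℕ × ℝ), IsUnif2Net n L ∧ (∀ p ∈ L, p.1 = 1) ∧
      L.length = 2 * n - 3) ∧
    (IsUnif2Net n (unifSeq n) ∧ (∀ p ∈ unifSeq n, p.1 = 1) ∧
      (unifSeq n).length = 2 * n - 3) := by
  have h1n : (1 : ℕ) ∈ Finset.Icc 1 n := Finset.mem_Icc.mpr (by omega)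
  have h2n : (2 : ℕ) ∈ Finset.Icc 1 n := Finset.mem_Icc.mpr (by omega)
  have hlen : (unifSeq n).length = 2 * n - 3 := by
    simp only [unifSeq, List.length_cons, List.length_flatMap]
    have : ((List.range (n - 2)).map
        (fun i => ([((1 : ℕ), i + 3, (2 : ℝ) / ((n : ℝ) - (i : ℝ))),
          ((1 : ℕ), (2 : ℕ), (1 / 2 : ℝ))] : List (ℕ × ℕ × ℝ)).length)) =
        (List.range (n - 2)).map (fun _ => 2) := by
      simp
    simp only [List.length_nil, zero_add, Nat.reduceAdd]
    rw [List.map_const', List.sum_replicate, List.length_range, smul_eq_mul]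
    omega
  have hstar : ∀ p ∈ unifSeq n, p.1 = 1 := by
    intro p hp
    rw [unifSeq] at hp
    rcases List.mem_cons.mp hp with h | h
    · rw [h]
    · obtain ⟨i, _, hpi⟩ := List.mem_flatMap.mp h
      rcases List.mem_cons.mp hpi with h' | h'
      · rw [h']
      · rcases List.mem_cons.mp h' with h'' | h''
        · rw [h'']
        · exact absurd h'' List.not_mem_nil
  have hvalid : ValidLazy n (unifSeq n) := by
    intro p hp
    rw [unifSeq] at hp
    rcases List.mem_cons.mp hp with h | h
    · rw [h]
      refine ⟨?_, ?_, ?_, ?_, ?_⟩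
      · show (1 : ℕ) ∈ Finset.Icc 1 n; exact Finset.mem_Icc.mpr (by omega)
      · show (2 : ℕ) ∈ Finset.Icc 1 n; exact Finset.mem_Icc.mpr (by omega)
      · show (1 : ℕ) ≠ 2; omega
      · show (0 : ℝ) ≤ 1/2; norm_num
      · show (1/2 : ℝ) ≤ 1; norm_num
    · obtain ⟨i, hi, hpi⟩ := List.mem_flatMap.mp h
      have hi' : i < n - 2 := List.mem_range.mp hi
      have hcast : (i : ℝ) + 2 ≤ (n : ℝ) := by exact_mod_cast (by omega : i + 2 ≤ n)
      rcases List.mem_cons.mp hpi with h' | h'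
      · rw [h']
        refine ⟨?_, ?_, ?_, ?_, ?_⟩
        · show (1 : ℕ) ∈ Finset.Icc 1 n; exact Finset.mem_Icc.mpr (by omega)
        · show (i + 3 : ℕ) ∈ Finset.Icc 1 n; exact Finset.mem_Icc.mpr (by omega)
        · show (1 : ℕ) ≠ i + 3; omega
        · show (0 : ℝ) ≤ 2 / ((n : ℝ) - i); exact div_nonneg (by norm_num) (by linarith)
        · show 2 / ((n : ℝ) - i) ≤ 1
          rw [div_le_one (by linarith)]; linarith
      · rcases List.mem_cons.mp h' with h'' | h''
        · rw [h'']
          refine ⟨?_, ?_, ?_, ?_, ?_⟩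
          · show (1 : ℕ) ∈ Finset.Icc 1 n; exact Finset.mem_Icc.mpr (by omega)
          · show (2 : ℕ) ∈ Finset.Icc 1 n; exact Finset.mem_Icc.mpr (by omega)
          · show (1 : ℕ) ≠ 2; omega
          · show (0 : ℝ) ≤ 1/2; norm_num
          · show (1/2 : ℝ) ≤ 1; norm_num
        · exact absurd h'' List.not_mem_nil
  have hmain : ∀ x y : ℕ, x ∈ Finset.Icc 1 n → y ∈ Finset.Icc 1 n → x ≠ y →
      (∑ f : Fin (unifSeq n).length → Bool,
        if lazyOutcome (unifSeq n) f 1 = x ∧ lazyOutcome (unifSeq n) f 2 = y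
          then lazyWeight (unifSeq n) f else 0)
        = 1 / ((n : ℝ) * ((n : ℝ) - 1)) := by
    intro x y hx hy hxy
    have key := key_sum n hn x y hx hy hxy (n - 2) 0 (by omega)
    have collapse : (∑ u ∈ Finset.Icc 1 n, ∑ v ∈ Finset.Icc 1 n,
        muD n 0 u v * lazyG (tailSeq n 0) u v x y)
        = (1/2 : ℝ) * lazyG (tailSeq n 0) 1 2 x y
          + (1/2 : ℝ) * lazyG (tailSeq n 0) 2 1 x y := by
      have e : ∀ u ∈ Finset.Icc 1 n, ∀ v ∈ Finset.Icc 1 n,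
          muD n 0 u v * lazyG (tailSeq n 0) u v x y
            = (if u = 1 ∧ v = 2 then (1/2 : ℝ) * lazyG (tailSeq n 0) u v x y else 0)
              + (if u = 2 ∧ v = 1 then (1/2 : ℝ) * lazyG (tailSeq n 0) u v x y else 0) := by
        intro u hu v hv
        rw [mu_zero_eval n hn u v hu hv, add_mul, ite_mul, ite_mul]
        simp
      rw [Finset.sum_congr rfl fun u hu => Finset.sum_congr rfl fun v hv => e u hu v hv]
      rw [Finset.sum_congr rfl fun u (hu : u ∈ Finset.Icc 1 n) => Finset.sum_add_distrib
        (s := Finset.Icc 1 n)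
        (f := fun v => if u = 1 ∧ v = 2 then (1/2 : ℝ) * lazyG (tailSeq n 0) u v x y else 0)
        (g := fun v => if u = 2 ∧ v = 1 then (1/2 : ℝ) * lazyG (tailSeq n 0) u v x y else 0),
        Finset.sum_add_distrib]
      rw [sum_ind (Finset.Icc 1 n) (fun u v => (1/2 : ℝ) * lazyG (tailSeq n 0) u v x y)
          1 2 h1n h2n,
        sum_ind (Finset.Icc 1 n) (fun u v => (1/2 : ℝ) * lazyG (tailSeq n 0) u v x y)
          2 1 h2n h1n]
    have expand2 : (∑ f : Fin (unifSeq n).length → Bool,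
        if lazyOutcome (unifSeq n) f 1 = x ∧ lazyOutcome (unifSeq n) f 2 = y
          then lazyWeight (unifSeq n) f else 0)
        = lazyG (unifSeq n) 1 2 x y := rfl
    rw [expand2, unifSeq_eq, lazyG_cons, Equiv.swap_apply_left, Equiv.swap_apply_right]
    rw [← key, collapse]
    ring
  have hnet : IsUnif2Net n (unifSeq n) := ⟨hvalid, hmain⟩
  exact ⟨⟨unifSeq n, hnet, hstar, hlen⟩, hnet, hstar, hlen⟩
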